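/- Let λ > 0 and α > 2, and define P(τ) = ∫₀^∞ exp( −πλ r²·( ₂F₁(−2/α, 1; 1 − 2/α; −τ) − 1 ) ) · 2πλ r·exp(−πλ r²) dr. Then P(τ) = 1 / ₂F₁(−2/α, 1; 1 − 2/α; −τ), and in particular P(τ) is independent of λ. -/

import Mathlib

open MeasureTheory Real Set

/-- `hyp2F1 α b z` is the Gauss hypergeometric function `₂F₁(−2/α, b; 1 − 2/α; z)`
(for `α > 2`, `b > 0`, `z ≤ 0`), expressed through its integral representation. -/
noncomputable def hyp2F1 (α b z : ℝ) : ℝ :=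
  1 + 2 * ∫ u in Ioi (1 : ℝ), (1 - (1 - z * u ^ (-α)) ^ (-b)) * u

/-- SIR coverage probability of a Poisson network with Rayleigh fading and nearest-BS
association (Lemma 3): with
`P(τ) = ∫₀^∞ exp(−πλ r² (₂F₁(−2/α,1;1−2/α;−τ) − 1)) · 2πλ r e^(−πλ r²) dr`,
one has `P(τ) = 1 / ₂F₁(−2/α,1;1−2/α;−τ)`; in particular `P(τ)` does not depend on `λ`. -/
theorem coverage_probability_rayleigh (l α τ : ℝ) (hl : 0 < l) (hα : 2 < α) (hτ : 0 ≤ τ) :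
    ∫ r in Ioi (0 : ℝ),
        Real.exp (-π * l * r ^ 2 * (hyp2F1 α 1 (-τ) - 1)) *
          (2 * π * l * r * Real.exp (-π * l * r ^ 2)) =
      1 / hyp2F1 α 1 (-τ) := by
  set H := hyp2F1 α 1 (-τ) with hHdef
  have hH : 1 ≤ H := by
    have hnn : 0 ≤ ∫ u in Ioi (1 : ℝ), (1 - (1 - (-τ) * u ^ (-α)) ^ (-(1:ℝ))) * u := by
      apply setIntegral_nonneg measurableSet_Ioi
      intro u hu
      have hu1 : (1:ℝ) < u := hu
      have hupos : (0:ℝ) < u := lt_trans one_pos hu1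
      have hb : (1:ℝ) ≤ 1 - (-τ) * u ^ (-α) := by
        have : 0 ≤ τ * u ^ (-α) := mul_nonneg hτ (Real.rpow_nonneg hupos.le _)
        nlinarith
      have h1 : (1 - (-τ) * u ^ (-α)) ^ (-(1:ℝ)) ≤ 1 :=
        Real.rpow_le_one_of_one_le_of_nonpos hb (by norm_num)
      have : 0 ≤ 1 - (1 - (-τ) * u ^ (-α)) ^ (-(1:ℝ)) := by linarith
      exact mul_nonneg this hupos.le
    have : H = 1 + 2 * ∫ u in Ioi (1 : ℝ), (1 - (1 - (-τ) * u ^ (-α)) ^ (-(1:ℝ))) * u := rfl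
    linarith
  have hHpos : 0 < H := lt_of_lt_of_le one_pos hH
  have hc : 0 < π * l * H := by positivity
  set c := π * l * H with hcdef
  -- antiderivative
  have key : ∫ r in Ioi (0:ℝ), (2 * π * l * r) * Real.exp (-(c * r ^ 2)) = 1 / H := by
    have hderiv : ∀ x ∈ Ici (0:ℝ),
        HasDerivAt (fun r : ℝ => -(1 / H) * Real.exp (-(c * r ^ 2)))
          ((2 * π * l * x) * Real.exp (-(c * x ^ 2))) x := by
      intro x _
      have h1 : HasDerivAt (fun r : ℝ => -(c * r ^ 2)) (-(c * (2 * x))) x := by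
        have := ((hasDerivAt_pow 2 x).const_mul c).neg
        exact this.congr_deriv (by simp)
      have h2 := (h1.exp).const_mul (-(1 / H))
      refine h2.congr_deriv ?_
      have : H ≠ 0 := ne_of_gt hHpos
      rw [hcdef]
      field_simp
    have hpos : ∀ x ∈ Ioi (0:ℝ), 0 ≤ (2 * π * l * x) * Real.exp (-(c * x ^ 2)) := by
      intro x hx
      have : (0:ℝ) < x := hx
      positivity
    have htend : Filter.Tendsto (fun r : ℝ => -(1 / H) * Real.exp (-(c * r ^ 2)))
        Filter.atTop (nhds 0) := by
      have h1 : Filter.Tendsto (fun r : ℝ => -(c * r ^ 2)) Filter.atTop Filter.atBot := by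
        apply Filter.tendsto_neg_atBot_iff.mpr
        exact (Filter.tendsto_pow_atTop (by norm_num)).const_mul_atTop hc
      have := (Real.tendsto_exp_atBot.comp h1).const_mul (-(1 / H))
      simpa using this
    have := integral_Ioi_of_hasDerivAt_of_nonneg' hderiv hpos htend
    rw [this]
    simp
  rw [← key]
  apply setIntegral_congr_fun measurableSet_Ioi
  intro r _
  have h : Real.exp (-π * l * r ^ 2 * (H - 1)) * Real.exp (-π * l * r ^ 2)
      = Real.exp (-(c * r ^ 2)) := by
    rw [← Real.exp_add]; congr 1; rw [hcdef]; ring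
  show Real.exp (-π * l * r ^ 2 * (H - 1)) * (2 * π * l * r * Real.exp (-π * l * r ^ 2))
      = 2 * π * l * r * Real.exp (-(c * r ^ 2))
  rw [← h]; ring
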